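/- Let Λ, u_0, f, g : ℝ² → ℝ be twice differentiable functions satisfying the system: (i) f_x + g_y = 0; (ii) (u_0)_x + 2Λ_x - (1/2) g (f_y - g_x) = 0; (iii) -(u_0)_y + 2Λ_y + (1/2) f (f_y - g_x) = 0. Then the following two conservation laws hold: (u_0 + 2Λ + (1/4)(g² - f²))_x - ((1/2) f g)_y = 0 and (-u_0 + 2Λ - (1/4)(g² - f²))_y - ((1/2) f g)_x = 0. -/

import Mathlib

/-- From the N = 2 system (i) `f_x + g_y = 0`,
(ii) `(u₀)_x + 2Λ_x - (1/2)g(f_y - g_x) = 0`,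
(iii) `-(u₀)_y + 2Λ_y + (1/2)f(f_y - g_x) = 0`,
the two conservation laws
`(u₀ + 2Λ + (1/4)(g² - f²))_x - ((1/2)fg)_y = 0` and
`(-u₀ + 2Λ - (1/4)(g² - f²))_y - ((1/2)fg)_x = 0` follow. -/
theorem stmt_4 (Λ u₀ f g : ℝ × ℝ → ℝ)
    (hΛ : ContDiff ℝ 2 Λ) (hu₀ : ContDiff ℝ 2 u₀)
    (hf : ContDiff ℝ 2 f) (hg : ContDiff ℝ 2 g)
    (h1 : ∀ p, fderiv ℝ f p (1, 0) + fderiv ℝ g p (0, 1) = 0)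
    (h2 : ∀ p, fderiv ℝ u₀ p (1, 0) + 2 * fderiv ℝ Λ p (1, 0)
      - (1 / 2) * g p * (fderiv ℝ f p (0, 1) - fderiv ℝ g p (1, 0)) = 0)
    (h3 : ∀ p, -fderiv ℝ u₀ p (0, 1) + 2 * fderiv ℝ Λ p (0, 1)
      + (1 / 2) * f p * (fderiv ℝ f p (0, 1) - fderiv ℝ g p (1, 0)) = 0) :
    ∀ p : ℝ × ℝ,
      fderiv ℝ (fun q => u₀ q + 2 * Λ q + (1 / 4) * ((g q) ^ 2 - (f q) ^ 2)) p (1, 0)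
        - fderiv ℝ (fun q => (1 / 2) * f q * g q) p (0, 1) = 0 ∧
      fderiv ℝ (fun q => -u₀ q + 2 * Λ q - (1 / 4) * ((g q) ^ 2 - (f q) ^ 2)) p (0, 1)
        - fderiv ℝ (fun q => (1 / 2) * f q * g q) p (1, 0) = 0 := by
  intro p
  have dΛ : DifferentiableAt ℝ Λ p := (hΛ.differentiable (by norm_num)).differentiableAt
  have du : DifferentiableAt ℝ u₀ p := (hu₀.differentiable (by norm_num)).differentiableAt
  have df : DifferentiableAt ℝ f p := (hf.differentiable (by norm_num)).differentiableAt
  have dg : DifferentiableAt ℝ g p := (hg.differentiable (by norm_num)).differentiableAt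
  have hg2 : HasFDerivAt (fun q => g q ^ 2) ((2 * g p) • fderiv ℝ g p) p := by
    have h := dg.hasFDerivAt.mul dg.hasFDerivAt
    have e : (2 * g p) • fderiv ℝ g p = g p • fderiv ℝ g p + g p • fderiv ℝ g p := by
      rw [two_mul, add_smul]
    rw [e]; simp only [pow_two]; exact h
  have hf2 : HasFDerivAt (fun q => f q ^ 2) ((2 * f p) • fderiv ℝ f p) p := by
    have h := df.hasFDerivAt.mul df.hasFDerivAt
    have e : (2 * f p) • fderiv ℝ f p = f p • fderiv ℝ f p + f p • fderiv ℝ f p := by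
      rw [two_mul, add_smul]
    rw [e]; simp only [pow_two]; exact h
  have key : ∀ v : ℝ × ℝ,
      fderiv ℝ (fun q => u₀ q + 2 * Λ q + (1 / 4) * ((g q) ^ 2 - (f q) ^ 2)) p v
        = fderiv ℝ u₀ p v + 2 * fderiv ℝ Λ p v
          + (1/4) * (2 * g p * fderiv ℝ g p v - 2 * f p * fderiv ℝ f p v) := by
    intro v
    have H : HasFDerivAt (fun q => u₀ q + 2 * Λ q + (1 / 4) * ((g q) ^ 2 - (f q) ^ 2))
        (fderiv ℝ u₀ p + (2:ℝ) • fderiv ℝ Λ p +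
          (1/4 : ℝ) • ((2 * g p) • fderiv ℝ g p - (2 * f p) • fderiv ℝ f p)) p :=
      (du.hasFDerivAt.add (dΛ.hasFDerivAt.const_mul 2)).add ((hg2.sub hf2).const_mul (1/4 : ℝ))
    rw [H.fderiv]; simp
  have key2 : ∀ v : ℝ × ℝ,
      fderiv ℝ (fun q => -u₀ q + 2 * Λ q - (1 / 4) * ((g q) ^ 2 - (f q) ^ 2)) p v
        = -fderiv ℝ u₀ p v + 2 * fderiv ℝ Λ p v
          - (1/4) * (2 * g p * fderiv ℝ g p v - 2 * f p * fderiv ℝ f p v) := by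
    intro v
    have H : HasFDerivAt (fun q => -u₀ q + 2 * Λ q - (1 / 4) * ((g q) ^ 2 - (f q) ^ 2))
        (-fderiv ℝ u₀ p + (2:ℝ) • fderiv ℝ Λ p -
          (1/4 : ℝ) • ((2 * g p) • fderiv ℝ g p - (2 * f p) • fderiv ℝ f p)) p :=
      (du.hasFDerivAt.neg.add (dΛ.hasFDerivAt.const_mul 2)).sub
        ((hg2.sub hf2).const_mul (1/4 : ℝ))
    rw [H.fderiv]; simp
  have key3 : ∀ v : ℝ × ℝ,
      fderiv ℝ (fun q => (1 / 2) * f q * g q) p v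
        = (1/2) * (f p * fderiv ℝ g p v + g p * fderiv ℝ f p v) := by
    intro v
    have H : HasFDerivAt (fun q => (1 / 2) * f q * g q)
        ((1/2 : ℝ) • (f p • fderiv ℝ g p + g p • fderiv ℝ f p)) p := by
      have h := (df.hasFDerivAt.mul dg.hasFDerivAt).const_mul (1/2 : ℝ)
      have e : (fun q => (1/2 : ℝ) * f q * g q) = fun q => (1/2 : ℝ) * (f q * g q) := by
        funext q; ring
      rw [e]; exact h
    rw [H.fderiv]; simp; ring
  rw [key (1,0), key2 (0,1), key3 (0,1), key3 (1,0)]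
  constructor
  · linear_combination h2 p - (1/2) * f p * h1 p
  · linear_combination h3 p - (1/2) * g p * h1 p
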